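/- Let A ⊆ B(H) be an operator algebra with contractive approximate identity and M ⊆ B(H,K) a norm-closed ternary ring of operators (M M* M ⊆ M) such that M* M A ⊆ A and A M* M ⊆ A. Then B := the closed linear span of M A M* is a norm-closed subalgebra of B(K), and A₀ := the closed linear span of M* B M is a norm-closed subalgebra of B(H). -/
import Mathlib


set_option maxHeartbeats 1000000

open Filter Topology ContinuousLinearMap

/-- The norm-closed linear span of a set of operators. -/
noncomputable def clspan {H K : Type*} [NormedAddCommGroup H] [InnerProductSpace ℂ H]
    [NormedAddCommGroup K] [InnerProductSpace ℂ K] (S : Set (H →L[ℂ] K)) : Set (H →L[ℂ] K) :=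
  closure ((Submodule.span ℂ S : Submodule ℂ (H →L[ℂ] K)) : Set (H →L[ℂ] K))

/-- Auxiliary: a bilinear continuous map sending generators into a span maps
closures of spans into the closure of the span. -/
lemma clspan_key {X Y Z : Type*} [NormedAddCommGroup X] [NormedSpace ℂ X]
    [NormedAddCommGroup Y] [NormedSpace ℂ Y] [NormedAddCommGroup Z] [NormedSpace ℂ Z]
    (f : X → Y → Z) (hf : Continuous fun p : X × Y => f p.1 p.2)
    (haddl : ∀ x x' y, f (x + x') y = f x y + f x' y)
    (hsmull : ∀ (c : ℂ) x y, f (c • x) y = c • f x y)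
    (haddr : ∀ x y y', f x (y + y') = f x y + f x y')
    (hsmulr : ∀ (c : ℂ) x y, f x (c • y) = c • f x y)
    {s : Set X} {t : Set Y} {u : Set Z}
    (h : ∀ a ∈ s, ∀ b ∈ t, f a b ∈ Submodule.span ℂ u) :
    ∀ x ∈ closure ((Submodule.span ℂ s : Submodule ℂ X) : Set X),
      ∀ y ∈ closure ((Submodule.span ℂ t : Submodule ℂ Y) : Set Y),
        f x y ∈ closure ((Submodule.span ℂ u : Submodule ℂ Z) : Set Z) := by
  have h0l : ∀ y, f 0 y = 0 := fun y => by
    have := hsmull 0 0 y; simpa using this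
  have h0r : ∀ x, f x 0 = 0 := fun x => by
    have := hsmulr 0 x 0; simpa using this
  have hspan : ∀ x ∈ Submodule.span ℂ s, ∀ y ∈ Submodule.span ℂ t,
      f x y ∈ Submodule.span ℂ u := by
    intro x hx
    induction hx using Submodule.span_induction with
    | mem a ha =>
        intro y hy
        induction hy using Submodule.span_induction with
        | mem b hb => exact h a ha b hb
        | zero => rw [h0r]; exact zero_mem _
        | add y1 y2 _ _ ih1 ih2 => rw [haddr]; exact add_mem ih1 ih2
        | smul c y1 _ ih => rw [hsmulr]; exact Submodule.smul_mem _ _ ih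
    | zero => intro y hy; rw [h0l]; exact zero_mem _
    | add x1 x2 _ _ ih1 ih2 =>
        intro y hy; rw [haddl]; exact add_mem (ih1 y hy) (ih2 y hy)
    | smul c x1 _ ih =>
        intro y hy; rw [hsmull]; exact Submodule.smul_mem _ _ (ih y hy)
  intro x hx y hy
  exact map_mem_closure₂ hf hx hy (fun a ha b hb => hspan a ha b hb)

/-- If `A ⊆ B(H)` is an operator algebra with contractive approximate identity and
`M ⊆ B(H,K)` is a norm-closed TRO with `M* M A ⊆ A` and `A M* M ⊆ A`, then
`B := clspan (M A M*)` is a norm-closed subalgebra of `B(K)` and `A₀ := clspan (M* B M)` is a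
norm-closed subalgebra of `B(H)`. -/
theorem stmt_1 {H K : Type*} [NormedAddCommGroup H] [InnerProductSpace ℂ H] [CompleteSpace H]
    [NormedAddCommGroup K] [InnerProductSpace ℂ K] [CompleteSpace K]
    (A : Submodule ℂ (H →L[ℂ] H)) (M : Submodule ℂ (H →L[ℂ] K))
    (hAc : IsClosed (A : Set (H →L[ℂ] H))) (hAm : ∀ x ∈ A, ∀ y ∈ A, x ∘L y ∈ A)
    {ι : Type*} [Preorder ι] [IsDirected ι (· ≤ ·)] [Nonempty ι]
    (e : ι → (H →L[ℂ] H)) (he : ∀ i, e i ∈ A) (hen : ∀ i, ‖e i‖ ≤ 1)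
    (heL : ∀ x ∈ A, Tendsto (fun i => e i ∘L x) atTop (𝓝 x))
    (heR : ∀ x ∈ A, Tendsto (fun i => x ∘L e i) atTop (𝓝 x))
    (hMc : IsClosed (M : Set (H →L[ℂ] K)))
    (hMtro : ∀ x ∈ M, ∀ y ∈ M, ∀ z ∈ M, x ∘L (adjoint y ∘L z) ∈ M)
    (hMMA : ∀ x ∈ M, ∀ y ∈ M, ∀ a ∈ A, adjoint x ∘L (y ∘L a) ∈ A)
    (hAMM : ∀ a ∈ A, ∀ x ∈ M, ∀ y ∈ M, a ∘L (adjoint x ∘L y) ∈ A)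
    (B : Set (K →L[ℂ] K)) (A₀ : Set (H →L[ℂ] H))
    (hB : B = clspan {x : K →L[ℂ] K | ∃ m ∈ M, ∃ a ∈ A, ∃ n ∈ M, x = m ∘L a ∘L adjoint n})
    (hA₀ : A₀ = clspan {x : H →L[ℂ] H | ∃ m ∈ M, ∃ b ∈ B, ∃ n ∈ M, x = adjoint m ∘L b ∘L n}) :
    IsClosed B ∧ (∀ x ∈ B, ∀ y ∈ B, x ∘L y ∈ B) ∧
    IsClosed A₀ ∧ (∀ x ∈ A₀, ∀ y ∈ A₀, x ∘L y ∈ A₀) := by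
  set Bgen : Set (K →L[ℂ] K) :=
    {x : K →L[ℂ] K | ∃ m ∈ M, ∃ a ∈ A, ∃ n ∈ M, x = m ∘L a ∘L adjoint n} with hBgen
  set Agen : Set (H →L[ℂ] H) :=
    {x : H →L[ℂ] H | ∃ m ∈ M, ∃ b ∈ B, ∃ n ∈ M, x = adjoint m ∘L b ∘L n} with hAgen
  -- B is closed under multiplication (on generators, hence everywhere)
  have hBgenmul : ∀ a ∈ Bgen, ∀ b ∈ Bgen, a ∘L b ∈ Submodule.span ℂ Bgen := by
    rintro _ ⟨m, hm, a, ha, n, hn, rfl⟩ _ ⟨m', hm', a', ha', n', hn', rfl⟩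
    refine Submodule.subset_span ⟨m, hm, (a ∘L (adjoint n ∘L m')) ∘L a',
      hAm _ (hAMM a ha n hn m' hm') a' ha', n', hn', ?_⟩
    ext x; rfl
  have hBmul : ∀ x ∈ B, ∀ y ∈ B, x ∘L y ∈ B := by
    rw [hB]; unfold clspan
    intro x hx y hy
    refine clspan_key (fun x y => x ∘L y) ?_ ?_ ?_ ?_ ?_ hBgenmul x hx y hy
    · exact continuous_fst.clm_comp continuous_snd
    · intro x x' y; ext; simp
    · intro c x y; ext; simp
    · intro x y y'; ext; simp
    · intro c x y; ext; simp
  -- A₀ generators are closed under multiplication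
  have hAgenmul : ∀ a ∈ Agen, ∀ b ∈ Agen, a ∘L b ∈ Submodule.span ℂ Agen := by
    rintro _ ⟨m, hm, b, hb, n, hn, rfl⟩ _ ⟨m', hm', b', hb', n', hn', rfl⟩
    have hd : b ∘L ((n ∘L adjoint m') ∘L b') ∈ B := by
      rw [hB] at hb hb' ⊢; unfold clspan at hb hb' ⊢
      refine clspan_key (fun p q => p ∘L ((n ∘L adjoint m') ∘L q))
        ?_ ?_ ?_ ?_ ?_ ?_ b hb b' hb'
      · exact continuous_fst.clm_comp (continuous_const.clm_comp continuous_snd)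
      · intro x x' y; ext; simp
      · intro c x y; ext; simp
      · intro x y y'; ext; simp
      · intro c x y; ext; simp
      · rintro _ ⟨m₁, h₁, a, ha, m₂, h₂, rfl⟩ _ ⟨m₃, h₃, a', ha', m₄, h₄, rfl⟩
        refine Submodule.subset_span ⟨m₁, h₁,
          ((a ∘L (adjoint m₂ ∘L n)) ∘L (adjoint m' ∘L m₃)) ∘L a',
          hAm _ (hAMM _ (hAMM a ha m₂ h₂ n hn) m' hm' m₃ h₃) a' ha', m₄, h₄, ?_⟩
        ext x; rfl
    refine Submodule.subset_span ⟨m, hm, b ∘L ((n ∘L adjoint m') ∘L b'), hd, n', hn', ?_⟩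
    ext x; rfl
  have hAmul : ∀ x ∈ A₀, ∀ y ∈ A₀, x ∘L y ∈ A₀ := by
    rw [hA₀]; unfold clspan
    intro x hx y hy
    refine clspan_key (fun x y => x ∘L y) ?_ ?_ ?_ ?_ ?_ hAgenmul x hx y hy
    · exact continuous_fst.clm_comp continuous_snd
    · intro x x' y; ext; simp
    · intro c x y; ext; simp
    · intro x y y'; ext; simp
    · intro c x y; ext; simp
  exact ⟨hB ▸ isClosed_closure, hBmul, hA₀ ▸ isClosed_closure, hAmul⟩
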